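/- With the hypotheses of Moser's example: x'' + x + x³ + ε·f(t,x,x') = 0, ε > 0, y·f(t,x,y) ≥ 0 everywhere, and y·f(t,x,y) > 0 whenever x·y > 0 — if x is a non-constant periodic solution then x'(t)·f(t, x(t), x'(t)) = 0 for all t. -/

import Mathlib

/-- In Moser's example, a non-constant periodic solution forces `x'·f(t,x,x') ≡ 0`. -/
theorem stmt8 (ε : ℝ) (hε : 0 < ε) (f : ℝ × ℝ × ℝ → ℝ) (hf : Continuous f)
    (hsign : ∀ t x y, y * f (t, x, y) ≥ 0)
    (hsign' : ∀ t x y, x * y > 0 → y * f (t, x, y) > 0)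
    (x : ℝ → ℝ) (hx : Differentiable ℝ x) (hx' : Differentiable ℝ (deriv x))
    (T : ℝ) (hT : 0 < T) (hper : ∀ t, x (t + T) = x t)
    (hnc : ∃ s t, x s ≠ x t)
    (hODE : ∀ t, deriv (deriv x) t + x t + (x t)^3 + ε * f (t, x t, deriv x t) = 0) :
    ∀ t, deriv x t * f (t, x t, deriv x t) = 0 := by
  set V : ℝ → ℝ := fun t => 2 * (x t)^2 + (x t)^4 + 2 * (deriv x t)^2 with hVdef
  -- derivative of V
  have hV : ∀ t, HasDerivAt V (-(4*ε) * (deriv x t * f (t, x t, deriv x t))) t := by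
    intro t
    have hX : HasDerivAt x (deriv x t) t := (hx t).hasDerivAt
    have hG : HasDerivAt (deriv x) (deriv (deriv x) t) t := (hx' t).hasDerivAt
    have h := (((hX.pow 2).const_mul (2:ℝ)).add (hX.pow 4)).add ((hG.pow 2).const_mul (2:ℝ))
    convert h using 1
    · rfl
    · rfl
    · rfl
    have hO := hODE t
    push_cast
    linear_combination (-4 * deriv x t) * hO
  have hVdiff : Differentiable ℝ V := fun t => (hV t).differentiableAt
  have hderivV : ∀ t, deriv V t = -(4*ε) * (deriv x t * f (t, x t, deriv x t)) := fun t =>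
    (hV t).deriv
  have hanti : Antitone V := by
    apply antitone_of_deriv_nonpos hVdiff
    intro t
    rw [hderivV t]
    have := hsign t (x t) (deriv x t)
    nlinarith
  -- periodicity of V
  have hderper : ∀ t, deriv x (t + T) = deriv x t := by
    intro t
    have : (fun s => x (s + T)) = x := funext hper
    calc deriv x (t + T) = deriv (fun s => x (s + T)) t := (deriv_comp_add_const x T t).symm
      _ = deriv x t := by rw [this]
  have hVper : ∀ t, V (t + T) = V t := by
    intro t
    simp only [hVdef, hper, hderper]
  have hVperN : ∀ (n : ℕ) t, V (t + n * T) = V t := by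
    intro n
    induction n with
    | zero => simp
    | succ k ih =>
      intro t
      have : t + (k + 1 : ℕ) * T = (t + k * T) + T := by push_cast; ring
      rw [this, hVper, ih]
  -- V is constant
  have hconst : ∀ a b, V a = V b := by
    have key : ∀ a b : ℝ, a ≤ b → V a = V b := by
      intro a b hab
      obtain ⟨n, hn⟩ := exists_nat_ge ((b - a) / T)
      have hba : b ≤ a + n * T := by
        have := (div_le_iff₀ hT).mp hn
        linarith
      have h1 : V b ≤ V a := hanti hab
      have h2 : V (a + n * T) ≤ V b := hanti hba
      rw [hVperN n a] at h2
      linarith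
    intro a b
    rcases le_total a b with h | h
    · exact key a b h
    · exact (key b a h).symm
  have hVc : V = fun _ => V 0 := funext fun t => hconst t 0
  intro t
  have : deriv V t = 0 := by rw [hVc]; simp
  rw [hderivV t] at this
  have h4ε : (4:ℝ) * ε ≠ 0 := by positivity
  have h : (4 * ε) * (deriv x t * f (t, x t, deriv x t)) = 0 := by linarith
  exact (mul_eq_zero.mp h).resolve_left h4ε
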